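/- With A, A* as above and for f ∈ L²_0(ρ_0), g ∈ L²_0(ρ_1), the following intertwining identities hold: A(I − A*A)^{-1} = (I − AA*)^{-1} A on L²_0(ρ_0) and A*(I − AA*)^{-1} = (I − A*A)^{-1} A* on L²_0(ρ_1). Moreover, for (X,Y) ∼ μ_ε, E[(I − A*A)^{-1}(f − A*g)(X) + (I − AA*)^{-1}(g − Af)(Y) | X] = f(X) almost surely, and the symmetric identity holds conditioning on Y. -/

import Mathlib

open MeasureTheory
open scoped ENNReal

section Aux
variable {α : Type*} [MeasurableSpace α] {μ ν : Measure α}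
  [IsProbabilityMeasure μ] [IsProbabilityMeasure ν]

/-- row marginal in `ℝ≥0∞` form. -/
lemma marg_row {K : α → α → ℝ} (hK : Measurable fun p : α × α => K p.1 p.2)
    (hmap : ((μ.prod ν).withDensity fun z => ENNReal.ofReal (K z.1 z.2)).map Prod.fst = μ) :
    (fun x => ∫⁻ y, ENNReal.ofReal (K x y) ∂ν) =ᵐ[μ] fun _ => 1 := by
  have hKm : Measurable fun z : α × α => ENNReal.ofReal (K z.1 z.2) := hK.ennreal_ofReal
  have hN : Measurable fun x => ∫⁻ y, ENNReal.ofReal (K x y) ∂ν :=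
    Measurable.lintegral_prod_right hKm
  refine ae_eq_of_forall_setLIntegral_eq_of_sigmaFinite hN measurable_const ?_
  intro s hs _
  have h1 : μ s = ((μ.prod ν).withDensity fun z => ENNReal.ofReal (K z.1 z.2))
      (Prod.fst ⁻¹' s) := by
    conv_lhs => rw [← hmap]
    rw [Measure.map_apply measurable_fst hs]
  rw [withDensity_apply _ (measurable_fst hs)] at h1
  have h2 : Prod.fst ⁻¹' s = s ×ˢ (Set.univ : Set α) := by ext z; simp
  rw [h2, ← Measure.prod_restrict, Measure.restrict_univ,
    MeasureTheory.lintegral_prod _ hKm.aemeasurable] at h1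
  simp only [lintegral_one, Measure.restrict_apply_univ]
  exact h1.symm

end Aux

section Aux2
variable {α : Type*} [MeasurableSpace α] {μ ν : Measure α}
  [IsProbabilityMeasure μ] [IsProbabilityMeasure ν] {K : α → α → ℝ}

lemma marg_col (hK : Measurable fun p : α × α => K p.1 p.2)
    (hmap : ((μ.prod ν).withDensity fun z => ENNReal.ofReal (K z.1 z.2)).map Prod.snd = ν) :
    (fun y => ∫⁻ x, ENNReal.ofReal (K x y) ∂μ) =ᵐ[ν] fun _ => 1 := by
  have hKm : Measurable fun z : α × α => ENNReal.ofReal (K z.1 z.2) := hK.ennreal_ofReal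
  have hN : Measurable fun y => ∫⁻ x, ENNReal.ofReal (K x y) ∂μ :=
    Measurable.lintegral_prod_left hKm
  refine ae_eq_of_forall_setLIntegral_eq_of_sigmaFinite hN measurable_const ?_
  intro s hs _
  have h1 : ν s = ((μ.prod ν).withDensity fun z => ENNReal.ofReal (K z.1 z.2))
      (Prod.snd ⁻¹' s) := by
    conv_lhs => rw [← hmap]
    rw [Measure.map_apply measurable_snd hs]
  rw [withDensity_apply _ (measurable_snd hs)] at h1
  have h2 : Prod.snd ⁻¹' s = (Set.univ : Set α) ×ˢ s := by ext z; simp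
  rw [h2, ← Measure.prod_restrict, Measure.restrict_univ,
    MeasureTheory.lintegral_prod_symm _ hKm.aemeasurable] at h1
  simp only [lintegral_one, Measure.restrict_apply_univ]
  exact h1.symm

/-- column sections are probability densities (real form). -/
lemma col_int_one (hK : Measurable fun p : α × α => K p.1 p.2) (hK0 : ∀ x y, 0 ≤ K x y)
    (hcol : (fun y => ∫⁻ x, ENNReal.ofReal (K x y) ∂μ) =ᵐ[ν] fun _ => 1) :
    ∀ᵐ y ∂ν, Integrable (fun x => K x y) μ ∧ ∫ x, K x y ∂μ = 1 := by
  filter_upwards [hcol] with y hy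
  have hsec : Measurable fun x => K x y := hK.comp (measurable_prodMk_right)
  have hint : Integrable (fun x => K x y) μ := by
    refine ⟨hsec.aestronglyMeasurable, ?_⟩
    rw [hasFiniteIntegral_iff_ofReal (Filter.Eventually.of_forall fun x => hK0 x y)]
    rw [hy]; exact ENNReal.one_lt_top
  refine ⟨hint, ?_⟩
  rw [integral_eq_lintegral_of_nonneg_ae (Filter.Eventually.of_forall fun x => hK0 x y)
    hsec.aestronglyMeasurable, hy]
  simp

/-- the operator is strongly measurable. -/
lemma T_sm (hK : Measurable fun p : α × α => K p.1 p.2) {v : α → ℝ} (hv : Measurable v) :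
    StronglyMeasurable fun x => ∫ y, v y * K x y ∂ν := by
  have : StronglyMeasurable fun z : α × α => v z.2 * K z.1 z.2 :=
    ((hv.comp measurable_snd).mul hK).stronglyMeasurable
  exact this.integral_prod_right'

/-- integrability over the product. -/
lemma T_prod_int (hK : Measurable fun p : α × α => K p.1 p.2) (hK0 : ∀ x y, 0 ≤ K x y)
    (hcol : (fun y => ∫⁻ x, ENNReal.ofReal (K x y) ∂μ) =ᵐ[ν] fun _ => 1)
    {v : α → ℝ} (hv : Measurable v) (hvi : Integrable v ν) :
    Integrable (fun z : α × α => v z.2 * K z.1 z.2) (μ.prod ν) := by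
  have hm : Measurable fun z : α × α => v z.2 * K z.1 z.2 := (hv.comp measurable_snd).mul hK
  refine ⟨hm.aestronglyMeasurable, ?_⟩
  have key : ∫⁻ z, ‖v z.2 * K z.1 z.2‖ₑ ∂(μ.prod ν)
      = ∫⁻ y, ENNReal.ofReal |v y| ∂ν := by
    calc ∫⁻ z, ‖v z.2 * K z.1 z.2‖ₑ ∂(μ.prod ν)
        = ∫⁻ z : α × α, ENNReal.ofReal |v z.2| * ENNReal.ofReal (K z.1 z.2) ∂(μ.prod ν) := by
          apply lintegral_congr; intro z
          rw [Real.enorm_eq_ofReal_abs, abs_mul, ENNReal.ofReal_mul (abs_nonneg _),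
            abs_of_nonneg (hK0 _ _)]
      _ = ∫⁻ y, ∫⁻ x, ENNReal.ofReal |v y| * ENNReal.ofReal (K x y) ∂μ ∂ν :=
          lintegral_prod_symm' _ ((hv.comp measurable_snd).abs.ennreal_ofReal.mul
            hK.ennreal_ofReal)
      _ = ∫⁻ y, ENNReal.ofReal |v y| * ∫⁻ x, ENNReal.ofReal (K x y) ∂μ ∂ν := by
          apply lintegral_congr; intro y
          exact lintegral_const_mul _ ((hK.comp measurable_prodMk_right).ennreal_ofReal)
      _ = ∫⁻ y, ENNReal.ofReal |v y| ∂ν := by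
          refine lintegral_congr_ae (hcol.mono fun y hy => ?_)
          simp only at hy ⊢
          rw [hy, mul_one]
  rw [HasFiniteIntegral, key]
  have := hvi.2
  rw [HasFiniteIntegral] at this
  apply lt_of_le_of_lt _ this
  exact lintegral_mono fun y => le_of_eq (Real.enorm_eq_ofReal_abs _).symm

end Aux2

section Aux3
variable {α : Type*} [MeasurableSpace α] {μ ν : Measure α}
  [IsProbabilityMeasure μ] [IsProbabilityMeasure ν] {K : α → α → ℝ}

lemma T_sec_int (hK : Measurable fun p : α × α => K p.1 p.2) (hK0 : ∀ x y, 0 ≤ K x y)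
    (hcol : (fun y => ∫⁻ x, ENNReal.ofReal (K x y) ∂μ) =ᵐ[ν] fun _ => 1)
    {v : α → ℝ} (hv : Measurable v) (hvi : Integrable v ν) :
    ∀ᵐ x ∂μ, Integrable (fun y => v y * K x y) ν :=
  (T_prod_int hK hK0 hcol hv hvi).prod_right_ae

lemma T_mean_zero (hK : Measurable fun p : α × α => K p.1 p.2) (hK0 : ∀ x y, 0 ≤ K x y)
    (hcol : (fun y => ∫⁻ x, ENNReal.ofReal (K x y) ∂μ) =ᵐ[ν] fun _ => 1)
    {v : α → ℝ} (hv : Measurable v) (hvi : Integrable v ν) (hv0 : ∫ y, v y ∂ν = 0) :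
    ∫ x, (∫ y, v y * K x y ∂ν) ∂μ = 0 := by
  have hF : Integrable (fun z : α × α => v z.2 * K z.1 z.2) (μ.prod ν) :=
    T_prod_int hK hK0 hcol hv hvi
  have h1 : ∫ x, (∫ y, v y * K x y ∂ν) ∂μ
      = ∫ z : α × α, v z.2 * K z.1 z.2 ∂(μ.prod ν) := (integral_prod _ hF).symm
  rw [h1, integral_prod_symm _ hF]
  have h2 : ∫ y, (∫ x, v y * K x y ∂μ) ∂ν = ∫ y, v y ∂ν := by
    refine integral_congr_ae ?_
    filter_upwards [col_int_one hK hK0 hcol] with y hy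
    rw [integral_const_mul, hy.2, mul_one]
  rw [h2, hv0]

lemma T_congr {a b : α → ℝ} (h : a =ᵐ[ν] b) :
    (fun x => ∫ y, a y * K x y ∂ν) = fun x => ∫ y, b y * K x y ∂ν := by
  funext x
  exact integral_congr_ae (h.mono fun y hy => by simp only; rw [hy])

lemma T_sub {a b : α → ℝ}
    (ha : ∀ᵐ x ∂μ, Integrable (fun y => a y * K x y) ν)
    (hb : ∀ᵐ x ∂μ, Integrable (fun y => b y * K x y) ν) :
    (fun x => ∫ y, (a y - b y) * K x y ∂ν)
      =ᵐ[μ] fun x => (∫ y, a y * K x y ∂ν) - ∫ y, b y * K x y ∂ν := by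
  filter_upwards [ha, hb] with x hax hbx
  simp only [sub_mul]
  exact integral_sub hax hbx

lemma T_add {a b : α → ℝ}
    (ha : ∀ᵐ x ∂μ, Integrable (fun y => a y * K x y) ν)
    (hb : ∀ᵐ x ∂μ, Integrable (fun y => b y * K x y) ν) :
    (fun x => ∫ y, (a y + b y) * K x y ∂ν)
      =ᵐ[μ] fun x => (∫ y, a y * K x y ∂ν) + ∫ y, b y * K x y ∂ν := by
  filter_upwards [ha, hb] with x hax hbx
  simp only [add_mul]
  exact integral_add hax hbx

end Aux3

section Aux4
variable {α : Type*} [MeasurableSpace α] {μ ν : Measure α}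
  [IsProbabilityMeasure μ] [IsProbabilityMeasure ν] {K : α → α → ℝ}

lemma setint_fst (hK : Measurable fun p : α × α => K p.1 p.2) (hK0 : ∀ x y, 0 ≤ K x y)
    (hcol : (fun y => ∫⁻ x, ENNReal.ofReal (K x y) ∂μ) =ᵐ[ν] fun _ => 1)
    {v : α → ℝ} (hv : Measurable v) (hvi : Integrable v ν)
    {s : Set α} (hs : MeasurableSet s) :
    ∫ z in Prod.fst ⁻¹' s, v z.2
        ∂((μ.prod ν).withDensity fun z => ENNReal.ofReal (K z.1 z.2))
      = ∫ x in s, (∫ y, v y * K x y ∂ν) ∂μ := by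
  have hF : Integrable (fun z : α × α => v z.2 * K z.1 z.2) (μ.prod ν) :=
    T_prod_int hK hK0 hcol hv hvi
  have hco : Prod.fst ⁻¹' s = s ×ˢ (Set.univ : Set α) := by ext z; simp
  have h1 : ∫ z in Prod.fst ⁻¹' s, v z.2
        ∂((μ.prod ν).withDensity fun z => ENNReal.ofReal (K z.1 z.2))
      = ∫ z in Prod.fst ⁻¹' s, v z.2 * K z.1 z.2 ∂(μ.prod ν) := by
    rw [show (fun z : α × α => ENNReal.ofReal (K z.1 z.2))
        = fun z : α × α => ((K z.1 z.2).toNNReal : ℝ≥0∞) from rfl,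
      setIntegral_withDensity_eq_setIntegral_smul hK.real_toNNReal _ (measurable_fst hs)]
    refine integral_congr_ae (Filter.Eventually.of_forall fun z => ?_)
    simp only [NNReal.smul_def, Real.coe_toNNReal _ (hK0 _ _), smul_eq_mul]
    ring
  rw [h1, hco, setIntegral_prod _ (by rw [hco] at *; exact hF.integrableOn)]
  simp only [Measure.restrict_univ]

lemma setint_snd (hK : Measurable fun p : α × α => K p.1 p.2) (hK0 : ∀ x y, 0 ≤ K x y)
    (hrow : (fun x => ∫⁻ y, ENNReal.ofReal (K x y) ∂ν) =ᵐ[μ] fun _ => 1)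
    {u : α → ℝ} (hu : Measurable u) (hui : Integrable u μ)
    {s : Set α} (hs : MeasurableSet s) :
    ∫ z in Prod.snd ⁻¹' s, u z.1
        ∂((μ.prod ν).withDensity fun z => ENNReal.ofReal (K z.1 z.2))
      = ∫ y in s, (∫ x, u x * K x y ∂μ) ∂ν := by
  have hF' : Integrable (fun z : α × α => u z.2 * K z.2 z.1) (ν.prod μ) :=
    T_prod_int (K := fun y x => K x y)
      (hK.comp (measurable_snd.prodMk measurable_fst)) (fun y x => hK0 x y) hrow hu hui
  have hF : Integrable (fun z : α × α => u z.1 * K z.1 z.2) (μ.prod ν) := by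
    have := hF'.swap
    exact this
  have hco : Prod.snd ⁻¹' s = (Set.univ : Set α) ×ˢ s := by ext z; simp
  have h1 : ∫ z in Prod.snd ⁻¹' s, u z.1
        ∂((μ.prod ν).withDensity fun z => ENNReal.ofReal (K z.1 z.2))
      = ∫ z in Prod.snd ⁻¹' s, u z.1 * K z.1 z.2 ∂(μ.prod ν) := by
    rw [show (fun z : α × α => ENNReal.ofReal (K z.1 z.2))
        = fun z : α × α => ((K z.1 z.2).toNNReal : ℝ≥0∞) from rfl,
      setIntegral_withDensity_eq_setIntegral_smul hK.real_toNNReal _ (measurable_snd hs)]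
    refine integral_congr_ae (Filter.Eventually.of_forall fun z => ?_)
    simp only [NNReal.smul_def, Real.coe_toNNReal _ (hK0 _ _), smul_eq_mul]
    ring
  rw [h1, hco, ← Measure.prod_restrict, Measure.restrict_univ,
    integral_prod_symm _ (by rw [← Measure.restrict_univ (μ := μ), Measure.prod_restrict]; exact hF.integrableOn)]

end Aux4


set_option maxHeartbeats 2000000 in
/-- With `A`, `A*` the Markov operators of the Schrödinger bridge
`μ_ε(x,y) = ξ(x,y)ρ₀(x)ρ₁(y)` (with spectral gap, so that the mean-zero equations below have
unique solutions), the intertwining identities hold: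
`A (I − A*A)⁻¹ = (I − AA*)⁻¹ A` on `L²₀(ρ₀)` and `A* (I − AA*)⁻¹ = (I − A*A)⁻¹ A*` on
`L²₀(ρ₁)` — expressed here via the defining equations of the inverses.  Moreover, for
`f ∈ L²₀(ρ₀)`, `g ∈ L²₀(ρ₁)` and `(X,Y) ∼ μ_ε`,
`E[(I − A*A)⁻¹(f − A*g)(X) + (I − AA*)⁻¹(g − Af)(Y) | X] = f(X)` a.s.,
and the symmetric identity holds conditioning on `Y`. -/
theorem intertwining_and_conditional_identities (d : ℕ)
    (ρ0 ρ1 : Measure (EuclideanSpace ℝ (Fin d)))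
    [IsProbabilityMeasure ρ0] [IsProbabilityMeasure ρ1]
    (ξ : EuclideanSpace ℝ (Fin d) × EuclideanSpace ℝ (Fin d) → ℝ)
    (hξmeas : Measurable ξ) (hξpos : ∀ z, 0 ≤ ξ z)
    (με : Measure (EuclideanSpace ℝ (Fin d) × EuclideanSpace ℝ (Fin d)))
    [IsProbabilityMeasure με]
    (hμε : με = (ρ0.prod ρ1).withDensity (fun z => ENNReal.ofReal (ξ z)))
    (hmar0 : με.map Prod.fst = ρ0) (hmar1 : με.map Prod.snd = ρ1)
    (Aop Astar : (EuclideanSpace ℝ (Fin d) → ℝ) → EuclideanSpace ℝ (Fin d) → ℝ)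
    (hA : ∀ f y, Aop f y = ∫ x, f x * ξ (x, y) ∂ρ0)
    (hAstar : ∀ g x, Astar g x = ∫ y, g y * ξ (x, y) ∂ρ1)
    (s1 : ℝ) (hs0 : 0 ≤ s1) (hs1 : s1 < 1)
    (hgapA : ∀ f : EuclideanSpace ℝ (Fin d) → ℝ, MemLp f 2 ρ0 → ∫ x, f x ∂ρ0 = 0 →
      eLpNorm (Aop f) 2 ρ1 ≤ ENNReal.ofReal s1 * eLpNorm f 2 ρ0)
    (hgapAstar : ∀ g : EuclideanSpace ℝ (Fin d) → ℝ, MemLp g 2 ρ1 → ∫ y, g y ∂ρ1 = 0 →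
      eLpNorm (Astar g) 2 ρ0 ≤ ENNReal.ofReal s1 * eLpNorm g 2 ρ1) :
    -- (i) intertwining: `A (I − A*A)⁻¹ f = (I − AA*)⁻¹ (A f)` for `f ∈ L²₀(ρ₀)`
    (∀ f u v : EuclideanSpace ℝ (Fin d) → ℝ,
      MemLp f 2 ρ0 → (∫ x, f x ∂ρ0 = 0) →
      MemLp u 2 ρ0 → (∫ x, u x ∂ρ0 = 0) →
      ((fun x => u x - Astar (Aop u) x) =ᵐ[ρ0] f) →
      MemLp v 2 ρ1 → (∫ y, v y ∂ρ1 = 0) →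
      ((fun y => v y - Aop (Astar v) y) =ᵐ[ρ1] Aop f) →
      v =ᵐ[ρ1] Aop u) ∧
    -- (ii) intertwining: `A* (I − AA*)⁻¹ g = (I − A*A)⁻¹ (A* g)` for `g ∈ L²₀(ρ₁)`
    (∀ g u v : EuclideanSpace ℝ (Fin d) → ℝ,
      MemLp g 2 ρ1 → (∫ y, g y ∂ρ1 = 0) →
      MemLp v 2 ρ1 → (∫ y, v y ∂ρ1 = 0) →
      ((fun y => v y - Aop (Astar v) y) =ᵐ[ρ1] g) →
      MemLp u 2 ρ0 → (∫ x, u x ∂ρ0 = 0) →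
      ((fun x => u x - Astar (Aop u) x) =ᵐ[ρ0] Astar g) →
      u =ᵐ[ρ0] Astar v) ∧
    -- (iii) conditional expectation identities
    (∀ f g u v : EuclideanSpace ℝ (Fin d) → ℝ,
      MemLp f 2 ρ0 → (∫ x, f x ∂ρ0 = 0) →
      MemLp g 2 ρ1 → (∫ y, g y ∂ρ1 = 0) →
      MemLp u 2 ρ0 → (∫ x, u x ∂ρ0 = 0) →
      ((fun x => u x - Astar (Aop u) x) =ᵐ[ρ0] fun x => f x - Astar g x) →
      MemLp v 2 ρ1 → (∫ y, v y ∂ρ1 = 0) →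
      ((fun y => v y - Aop (Astar v) y) =ᵐ[ρ1] fun y => g y - Aop f y) →
      (με[(fun z => u z.1 + v z.2) | MeasurableSpace.comap Prod.fst inferInstance]
          =ᵐ[με] fun z => f z.1) ∧
      (με[(fun z => u z.1 + v z.2) | MeasurableSpace.comap Prod.snd inferInstance]
          =ᵐ[με] fun z => g z.2)) := by
  have hK : Measurable fun p : EuclideanSpace ℝ (Fin d) × EuclideanSpace ℝ (Fin d) =>
      ξ (p.1, p.2) := hξmeas.comp (measurable_fst.prodMk measurable_snd)
  have hKs : Measurable fun p : EuclideanSpace ℝ (Fin d) × EuclideanSpace ℝ (Fin d) =>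
      ξ (p.2, p.1) := hξmeas.comp (measurable_snd.prodMk measurable_fst)
  have hK0 : ∀ x y, 0 ≤ ξ (x, y) := fun x y => hξpos _
  have hK0s : ∀ y x, 0 ≤ ξ (x, y) := fun y x => hξpos _
  have hmap0 : ((ρ0.prod ρ1).withDensity fun z => ENNReal.ofReal (ξ (z.1, z.2))).map
      Prod.fst = ρ0 := by rw [hμε] at hmar0; exact hmar0
  have hmap1 : ((ρ0.prod ρ1).withDensity fun z => ENNReal.ofReal (ξ (z.1, z.2))).map
      Prod.snd = ρ1 := by rw [hμε] at hmar1; exact hmar1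
  have Mrow : (fun x => ∫⁻ y, ENNReal.ofReal (ξ (x, y)) ∂ρ1) =ᵐ[ρ0] fun _ => 1 :=
    marg_row (K := fun x y => ξ (x, y)) hK hmap0
  have Mcol : (fun y => ∫⁻ x, ENNReal.ofReal (ξ (x, y)) ∂ρ0) =ᵐ[ρ1] fun _ => 1 :=
    marg_col (K := fun x y => ξ (x, y)) hK hmap1
  -- pointwise description with a measurable representative
  have hAstar_eq : ∀ v v' : EuclideanSpace ℝ (Fin d) → ℝ, v =ᵐ[ρ1] v' →
      Astar v = fun x => ∫ y, v' y * ξ (x, y) ∂ρ1 := by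
    intro v v' hvv'
    funext x
    rw [hAstar]
    exact integral_congr_ae (hvv'.mono fun y hy => by simp only; rw [hy])
  have hAop_eq : ∀ u u' : EuclideanSpace ℝ (Fin d) → ℝ, u =ᵐ[ρ0] u' →
      Aop u = fun y => ∫ x, u' x * ξ (x, y) ∂ρ0 := by
    intro u u' huu'
    funext y
    rw [hA]
    exact integral_congr_ae (huu'.mono fun x hx => by simp only; rw [hx])
  have hAstar_congr : ∀ a b : EuclideanSpace ℝ (Fin d) → ℝ, a =ᵐ[ρ1] b →
      Astar a = Astar b := by
    intro a b h
    rw [hAstar_eq a b h]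
    funext x
    rw [hAstar]
  have hAop_congr : ∀ a b : EuclideanSpace ℝ (Fin d) → ℝ, a =ᵐ[ρ0] b →
      Aop a = Aop b := by
    intro a b h
    rw [hAop_eq a b h]
    funext y
    rw [hA]
  -- membership facts
  have hAstar_memLp : ∀ v, MemLp v 2 ρ1 → ∫ y, v y ∂ρ1 = 0 → MemLp (Astar v) 2 ρ0 := by
    intro v hv hv0
    have hsm : StronglyMeasurable (Astar v) := by
      rw [hAstar_eq v _ hv.1.ae_eq_mk]
      exact T_sm (K := fun x y => ξ (x, y)) hK hv.1.stronglyMeasurable_mk.measurable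
    exact ⟨hsm.aestronglyMeasurable,
      lt_of_le_of_lt (hgapAstar v hv hv0) (ENNReal.mul_lt_top ENNReal.ofReal_lt_top hv.2)⟩
  have hAop_memLp : ∀ u, MemLp u 2 ρ0 → ∫ x, u x ∂ρ0 = 0 → MemLp (Aop u) 2 ρ1 := by
    intro u hu hu0
    have hsm : StronglyMeasurable (Aop u) := by
      rw [hAop_eq u _ hu.1.ae_eq_mk]
      exact T_sm (K := fun y x => ξ (x, y)) hKs hu.1.stronglyMeasurable_mk.measurable
    exact ⟨hsm.aestronglyMeasurable,
      lt_of_le_of_lt (hgapA u hu hu0) (ENNReal.mul_lt_top ENNReal.ofReal_lt_top hu.2)⟩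
  have hAstar_mean : ∀ v, MemLp v 2 ρ1 → ∫ y, v y ∂ρ1 = 0 → ∫ x, Astar v x ∂ρ0 = 0 := by
    intro v hv hv0
    rw [hAstar_eq v _ hv.1.ae_eq_mk]
    exact T_mean_zero (K := fun x y => ξ (x, y)) hK hK0 Mcol
      hv.1.stronglyMeasurable_mk.measurable
      ((hv.integrable one_le_two).congr hv.1.ae_eq_mk)
      (by rw [← integral_congr_ae hv.1.ae_eq_mk, hv0])
  have hAop_mean : ∀ u, MemLp u 2 ρ0 → ∫ x, u x ∂ρ0 = 0 → ∫ y, Aop u y ∂ρ1 = 0 := by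
    intro u hu hu0
    rw [hAop_eq u _ hu.1.ae_eq_mk]
    exact T_mean_zero (K := fun y x => ξ (x, y)) hKs hK0s Mrow
      hu.1.stronglyMeasurable_mk.measurable
      ((hu.integrable one_le_two).congr hu.1.ae_eq_mk)
      (by rw [← integral_congr_ae hu.1.ae_eq_mk, hu0])
  -- a.e. section integrability
  have hAstar_sec : ∀ v, MemLp v 2 ρ1 →
      ∀ᵐ x ∂ρ0, Integrable (fun y => v y * ξ (x, y)) ρ1 := by
    intro v hv
    have h' := T_sec_int (K := fun x y => ξ (x, y)) hK hK0 Mcol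
      hv.1.stronglyMeasurable_mk.measurable
      ((hv.integrable one_le_two).congr hv.1.ae_eq_mk)
    filter_upwards [h'] with x hx
    exact hx.congr (hv.1.ae_eq_mk.symm.mono fun y hy => by simp only; rw [hy])
  have hAop_sec : ∀ u, MemLp u 2 ρ0 →
      ∀ᵐ y ∂ρ1, Integrable (fun x => u x * ξ (x, y)) ρ0 := by
    intro u hu
    have h' := T_sec_int (K := fun y x => ξ (x, y)) hKs hK0s Mrow
      hu.1.stronglyMeasurable_mk.measurable
      ((hu.integrable one_le_two).congr hu.1.ae_eq_mk)
    filter_upwards [h'] with y hy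
    exact hy.congr (hu.1.ae_eq_mk.symm.mono fun x hx => by simp only; rw [hx])
  -- linearity
  have hAstar_sub : ∀ a b, MemLp a 2 ρ1 → MemLp b 2 ρ1 →
      ∀ c : EuclideanSpace ℝ (Fin d) → ℝ, (∀ y, c y = a y - b y) →
      (fun x => Astar c x) =ᵐ[ρ0] fun x => Astar a x - Astar b x := by
    intro a b ha hb c hc
    filter_upwards [hAstar_sec a ha, hAstar_sec b hb] with x h1 h2
    simp only [hAstar]
    rw [show (fun y => c y * ξ (x, y)) = fun y => a y * ξ (x, y) - b y * ξ (x, y) by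
      funext y; rw [hc y, sub_mul]]
    exact integral_sub h1 h2
  have hAstar_add : ∀ a b, MemLp a 2 ρ1 → MemLp b 2 ρ1 →
      ∀ c : EuclideanSpace ℝ (Fin d) → ℝ, (∀ y, c y = a y + b y) →
      (fun x => Astar c x) =ᵐ[ρ0] fun x => Astar a x + Astar b x := by
    intro a b ha hb c hc
    filter_upwards [hAstar_sec a ha, hAstar_sec b hb] with x h1 h2
    simp only [hAstar]
    rw [show (fun y => c y * ξ (x, y)) = fun y => a y * ξ (x, y) + b y * ξ (x, y) by
      funext y; rw [hc y, add_mul]]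
    exact integral_add h1 h2
  have hAop_sub : ∀ a b, MemLp a 2 ρ0 → MemLp b 2 ρ0 →
      ∀ c : EuclideanSpace ℝ (Fin d) → ℝ, (∀ x, c x = a x - b x) →
      (fun y => Aop c y) =ᵐ[ρ1] fun y => Aop a y - Aop b y := by
    intro a b ha hb c hc
    filter_upwards [hAop_sec a ha, hAop_sec b hb] with y h1 h2
    simp only [hA]
    rw [show (fun x => c x * ξ (x, y)) = fun x => a x * ξ (x, y) - b x * ξ (x, y) by
      funext x; rw [hc x, sub_mul]]
    exact integral_sub h1 h2
  have hAop_add : ∀ a b, MemLp a 2 ρ0 → MemLp b 2 ρ0 →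
      ∀ c : EuclideanSpace ℝ (Fin d) → ℝ, (∀ x, c x = a x + b x) →
      (fun y => Aop c y) =ᵐ[ρ1] fun y => Aop a y + Aop b y := by
    intro a b ha hb c hc
    filter_upwards [hAop_sec a ha, hAop_sec b hb] with y h1 h2
    simp only [hA]
    rw [show (fun x => c x * ξ (x, y)) = fun x => a x * ξ (x, y) + b x * ξ (x, y) by
      funext x; rw [hc x, add_mul]]
    exact integral_add h1 h2
  -- spectral gap fixed point lemmas
  have hs1s1 : ENNReal.ofReal (s1 * s1) < 1 := by
    rw [show (1 : ℝ≥0∞) = ENNReal.ofReal 1 by simp]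
    exact ENNReal.ofReal_lt_ofReal_iff_of_nonneg (by nlinarith) |>.mpr (by nlinarith)
  have gap0 : ∀ w, MemLp w 2 ρ0 → ∫ x, w x ∂ρ0 = 0 →
      (w =ᵐ[ρ0] fun x => Astar (Aop w) x) → w =ᵐ[ρ0] fun _ => 0 := by
    intro w hw hw0 hfix
    have hAw : MemLp (Aop w) 2 ρ1 := hAop_memLp w hw hw0
    have hAw0 : ∫ y, Aop w y ∂ρ1 = 0 := hAop_mean w hw hw0
    have h1 : eLpNorm w 2 ρ0 ≤ ENNReal.ofReal (s1 * s1) * eLpNorm w 2 ρ0 := by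
      calc eLpNorm w 2 ρ0 = eLpNorm (Astar (Aop w)) 2 ρ0 := eLpNorm_congr_ae hfix
        _ ≤ ENNReal.ofReal s1 * eLpNorm (Aop w) 2 ρ1 := hgapAstar _ hAw hAw0
        _ ≤ ENNReal.ofReal s1 * (ENNReal.ofReal s1 * eLpNorm w 2 ρ0) :=
            mul_le_mul_right (hgapA w hw hw0) _
        _ = ENNReal.ofReal (s1 * s1) * eLpNorm w 2 ρ0 := by
            rw [ENNReal.ofReal_mul hs0, mul_assoc]
    have hE0 : eLpNorm w 2 ρ0 = 0 := by
      by_contra hne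
      have hlt : ENNReal.ofReal (s1 * s1) * eLpNorm w 2 ρ0 < 1 * eLpNorm w 2 ρ0 :=
        ENNReal.mul_lt_mul_left hne hw.2.ne hs1s1
      rw [one_mul] at hlt
      exact absurd h1 (not_le.mpr hlt)
    exact (eLpNorm_eq_zero_iff hw.1 (by norm_num)).mp hE0
  have gap1 : ∀ w, MemLp w 2 ρ1 → ∫ y, w y ∂ρ1 = 0 →
      (w =ᵐ[ρ1] fun y => Aop (Astar w) y) → w =ᵐ[ρ1] fun _ => 0 := by
    intro w hw hw0 hfix
    have hAw : MemLp (Astar w) 2 ρ0 := hAstar_memLp w hw hw0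
    have hAw0 : ∫ x, Astar w x ∂ρ0 = 0 := hAstar_mean w hw hw0
    have h1 : eLpNorm w 2 ρ1 ≤ ENNReal.ofReal (s1 * s1) * eLpNorm w 2 ρ1 := by
      calc eLpNorm w 2 ρ1 = eLpNorm (Aop (Astar w)) 2 ρ1 := eLpNorm_congr_ae hfix
        _ ≤ ENNReal.ofReal s1 * eLpNorm (Astar w) 2 ρ0 := hgapA _ hAw hAw0
        _ ≤ ENNReal.ofReal s1 * (ENNReal.ofReal s1 * eLpNorm w 2 ρ1) :=
            mul_le_mul_right (hgapAstar w hw hw0) _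
        _ = ENNReal.ofReal (s1 * s1) * eLpNorm w 2 ρ1 := by
            rw [ENNReal.ofReal_mul hs0, mul_assoc]
    have hE0 : eLpNorm w 2 ρ1 = 0 := by
      by_contra hne
      have hlt : ENNReal.ofReal (s1 * s1) * eLpNorm w 2 ρ1 < 1 * eLpNorm w 2 ρ1 :=
        ENNReal.mul_lt_mul_left hne hw.2.ne hs1s1
      rw [one_mul] at hlt
      exact absurd h1 (not_le.mpr hlt)
    exact (eLpNorm_eq_zero_iff hw.1 (by norm_num)).mp hE0
  refine ⟨?_, ?_, ?_⟩
  · -- part (i)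
    intro f u v hf hf0 hu hu0 hEu hv hv0 hEv
    have hAu : MemLp (Aop u) 2 ρ1 := hAop_memLp u hu hu0
    have hAu0 : ∫ y, Aop u y ∂ρ1 = 0 := hAop_mean u hu hu0
    have hw : MemLp (fun y => v y - Aop u y) 2 ρ1 := hv.sub hAu
    have hw0 : ∫ y, (v y - Aop u y) ∂ρ1 = 0 := by
      rw [integral_sub (hv.integrable one_le_two) (hAu.integrable one_le_two), hv0, hAu0,
        sub_zero]
    have hsAu : MemLp (Astar (Aop u)) 2 ρ0 := hAstar_memLp _ hAu hAu0
    have hsv : MemLp (Astar v) 2 ρ0 := hAstar_memLp v hv hv0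
    have step1 : Aop (fun x => u x - Astar (Aop u) x) = Aop f := hAop_congr _ _ hEu
    have step2 : (fun y => Aop u y - Aop (Astar (Aop u)) y) =ᵐ[ρ1] Aop f := by
      rw [← step1]
      exact (hAop_sub u (Astar (Aop u)) hu hsAu _ fun x => rfl).symm
    have step3 : (fun y => Aop (fun x => Astar v x - Astar (Aop u) x) y) =ᵐ[ρ1]
        fun y => Aop (Astar v) y - Aop (Astar (Aop u)) y :=
      hAop_sub _ _ hsv hsAu _ fun x => rfl
    have step4 : Aop (Astar (fun y => v y - Aop u y)) =
        Aop (fun x => Astar v x - Astar (Aop u) x) :=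
      hAop_congr _ _ (hAstar_sub v (Aop u) hv hAu _ fun y => rfl)
    have hfix : (fun y => v y - Aop u y) =ᵐ[ρ1]
        fun y => Aop (Astar (fun y' => v y' - Aop u y')) y := by
      filter_upwards [hEv, step2, step3] with y h1 h2 h3
      rw [step4, h3]
      linarith
    have hzero := gap1 _ hw hw0 hfix
    filter_upwards [hzero] with y hy
    exact sub_eq_zero.mp hy
  · -- part (ii)
    intro g u v hg hg0 hv hv0 hEv hu hu0 hEu
    have hAv : MemLp (Astar v) 2 ρ0 := hAstar_memLp v hv hv0
    have hAv0 : ∫ x, Astar v x ∂ρ0 = 0 := hAstar_mean v hv hv0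
    have hw : MemLp (fun x => u x - Astar v x) 2 ρ0 := hu.sub hAv
    have hw0 : ∫ x, (u x - Astar v x) ∂ρ0 = 0 := by
      rw [integral_sub (hu.integrable one_le_two) (hAv.integrable one_le_two), hu0, hAv0,
        sub_zero]
    have hsAv : MemLp (Aop (Astar v)) 2 ρ1 := hAop_memLp _ hAv hAv0
    have hsu : MemLp (Aop u) 2 ρ1 := hAop_memLp u hu hu0
    have step1 : Astar (fun y => v y - Aop (Astar v) y) = Astar g := hAstar_congr _ _ hEv
    have step2 : (fun x => Astar v x - Astar (Aop (Astar v)) x) =ᵐ[ρ0] Astar g := by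
      rw [← step1]
      exact (hAstar_sub v (Aop (Astar v)) hv hsAv _ fun y => rfl).symm
    have step3 : (fun x => Astar (fun y => Aop u y - Aop (Astar v) y) x) =ᵐ[ρ0]
        fun x => Astar (Aop u) x - Astar (Aop (Astar v)) x :=
      hAstar_sub _ _ hsu hsAv _ fun y => rfl
    have step4 : Astar (Aop (fun x => u x - Astar v x)) =
        Astar (fun y => Aop u y - Aop (Astar v) y) :=
      hAstar_congr _ _ (hAop_sub u (Astar v) hu hAv _ fun x => rfl)
    have hfix : (fun x => u x - Astar v x) =ᵐ[ρ0]
        fun x => Astar (Aop (fun x' => u x' - Astar v x')) x := by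
      filter_upwards [hEu, step2, step3] with x h1 h2 h3
      rw [step4, h3]
      linarith
    have hzero := gap0 _ hw hw0 hfix
    filter_upwards [hzero] with x hx
    exact sub_eq_zero.mp hx
  · -- part (iii)
    intro f g u v hf hf0 hg hg0 hu hu0 hEu hv hv0 hEv
    have hsv : MemLp (Astar v) 2 ρ0 := hAstar_memLp v hv hv0
    have hsv0 : ∫ x, Astar v x ∂ρ0 = 0 := hAstar_mean v hv hv0
    have hAu : MemLp (Aop u) 2 ρ1 := hAop_memLp u hu hu0
    have hAu0 : ∫ y, Aop u y ∂ρ1 = 0 := hAop_mean u hu hu0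
    have hAf : MemLp (Aop f) 2 ρ1 := hAop_memLp f hf hf0
    have hsg : MemLp (Astar g) 2 ρ0 := hAstar_memLp g hg hg0
    have hAsv : MemLp (Aop (Astar v)) 2 ρ1 := hAop_memLp _ hsv hsv0
    have hsAu : MemLp (Astar (Aop u)) 2 ρ0 := hAstar_memLp _ hAu hAu0
    -- key identity 0 : u + A*v = f a.e.
    have hw0L : MemLp (fun x => u x + Astar v x - f x) 2 ρ0 := (hu.add hsv).sub hf
    have hw00 : ∫ x, (u x + Astar v x - f x) ∂ρ0 = 0 := by
      have i1 : Integrable (fun x => u x + Astar v x) ρ0 :=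
        (hu.integrable one_le_two).add (hsv.integrable one_le_two)
      rw [integral_sub i1 (hf.integrable one_le_two),
        integral_add (hu.integrable one_le_two) (hsv.integrable one_le_two), hu0, hsv0, hf0]
      ring
    have hq : (fun y => Aop (fun x => u x + Astar v x - f x) y) =ᵐ[ρ1]
        fun y => Aop u y + Aop (Astar v) y - Aop f y := by
      have e1 := hAop_sub (fun x => u x + Astar v x) f (hu.add hsv) hf
        (fun x => u x + Astar v x - f x) (fun x => rfl)
      have e2 := hAop_add u (Astar v) hu hsv (fun x => u x + Astar v x) (fun x => rfl)
      filter_upwards [e1, e2] with y h1 h2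
      rw [h1, h2]
    have hQ : Astar (Aop (fun x => u x + Astar v x - f x)) =
        Astar (fun y => Aop u y + Aop (Astar v) y - Aop f y) := hAstar_congr _ _ hq
    have hexp : (fun x => Astar (fun y => Aop u y + Aop (Astar v) y - Aop f y) x) =ᵐ[ρ0]
        fun x => Astar (Aop u) x + Astar (Aop (Astar v)) x - Astar (Aop f) x := by
      have e1 := hAstar_sub (fun y => Aop u y + Aop (Astar v) y) (Aop f) (hAu.add hAsv) hAf
        (fun y => Aop u y + Aop (Astar v) y - Aop f y) (fun y => rfl)
      have e2 := hAstar_add (Aop u) (Aop (Astar v)) hAu hAsv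
        (fun y => Aop u y + Aop (Astar v) y) (fun y => rfl)
      filter_upwards [e1, e2] with x h1 h2
      rw [h1, h2]
    have s1' : Astar (fun y => v y - Aop (Astar v) y) = Astar (fun y => g y - Aop f y) :=
      hAstar_congr _ _ hEv
    have s2 := hAstar_sub v (Aop (Astar v)) hv hAsv
      (fun y => v y - Aop (Astar v) y) (fun y => rfl)
    have s3 := hAstar_sub g (Aop f) hg hAf (fun y => g y - Aop f y) (fun y => rfl)
    have F2 : (fun x => Astar v x - Astar (Aop (Astar v)) x) =ᵐ[ρ0]
        fun x => Astar g x - Astar (Aop f) x := by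
      filter_upwards [s2, s3] with x h2 h3
      rw [← h2, s1', h3]
    have hfix0 : (fun x => u x + Astar v x - f x) =ᵐ[ρ0]
        fun x => Astar (Aop (fun x' => u x' + Astar v x' - f x')) x := by
      filter_upwards [hEu, F2, hexp] with x h1 h2 h3
      rw [hQ, h3]
      linarith
    have key0 : (fun x => u x + Astar v x) =ᵐ[ρ0] f := by
      filter_upwards [gap0 _ hw0L hw00 hfix0] with x hx
      simpa using sub_eq_zero.mp hx
    -- key identity 1 : v + A u = g a.e.
    have hw1L : MemLp (fun y => v y + Aop u y - g y) 2 ρ1 := (hv.add hAu).sub hg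
    have hw10 : ∫ y, (v y + Aop u y - g y) ∂ρ1 = 0 := by
      have i1 : Integrable (fun y => v y + Aop u y) ρ1 :=
        (hv.integrable one_le_two).add (hAu.integrable one_le_two)
      rw [integral_sub i1 (hg.integrable one_le_two),
        integral_add (hv.integrable one_le_two) (hAu.integrable one_le_two), hv0, hAu0, hg0]
      ring
    have hq' : (fun x => Astar (fun y => v y + Aop u y - g y) x) =ᵐ[ρ0]
        fun x => Astar v x + Astar (Aop u) x - Astar g x := by
      have e1 := hAstar_sub (fun y => v y + Aop u y) g (hv.add hAu) hg
        (fun y => v y + Aop u y - g y) (fun y => rfl)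
      have e2 := hAstar_add v (Aop u) hv hAu (fun y => v y + Aop u y) (fun y => rfl)
      filter_upwards [e1, e2] with x h1 h2
      rw [h1, h2]
    have hQ' : Aop (Astar (fun y => v y + Aop u y - g y)) =
        Aop (fun x => Astar v x + Astar (Aop u) x - Astar g x) := hAop_congr _ _ hq'
    have hexp' : (fun y => Aop (fun x => Astar v x + Astar (Aop u) x - Astar g x) y) =ᵐ[ρ1]
        fun y => Aop (Astar v) y + Aop (Astar (Aop u)) y - Aop (Astar g) y := by
      have e1 := hAop_sub (fun x => Astar v x + Astar (Aop u) x) (Astar g) (hsv.add hsAu) hsg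
        (fun x => Astar v x + Astar (Aop u) x - Astar g x) (fun x => rfl)
      have e2 := hAop_add (Astar v) (Astar (Aop u)) hsv hsAu
        (fun x => Astar v x + Astar (Aop u) x) (fun x => rfl)
      filter_upwards [e1, e2] with y h1 h2
      rw [h1, h2]
    have s1'' : Aop (fun x => u x - Astar (Aop u) x) = Aop (fun x => f x - Astar g x) :=
      hAop_congr _ _ hEu
    have s2' := hAop_sub u (Astar (Aop u)) hu hsAu
      (fun x => u x - Astar (Aop u) x) (fun x => rfl)
    have s3' := hAop_sub f (Astar g) hf hsg (fun x => f x - Astar g x) (fun x => rfl)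
    have F2' : (fun y => Aop u y - Aop (Astar (Aop u)) y) =ᵐ[ρ1]
        fun y => Aop f y - Aop (Astar g) y := by
      filter_upwards [s2', s3'] with y h2 h3
      rw [← h2, s1'', h3]
    have hfix1 : (fun y => v y + Aop u y - g y) =ᵐ[ρ1]
        fun y => Aop (Astar (fun y' => v y' + Aop u y' - g y')) y := by
      filter_upwards [hEv, F2', hexp'] with y h1 h2 h3
      rw [hQ', h3]
      linarith
    have key1 : (fun y => v y + Aop u y) =ᵐ[ρ1] g := by
      filter_upwards [gap1 _ hw1L hw10 hfix1] with y hy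
      simpa using sub_eq_zero.mp hy
    -- integrability bookkeeping
    have hfi : Integrable f ρ0 := hf.integrable one_le_two
    have hgi : Integrable g ρ1 := hg.integrable one_le_two
    have hui : Integrable u ρ0 := hu.integrable one_le_two
    have hvi : Integrable v ρ1 := hv.integrable one_le_two
    have hsvi : Integrable (Astar v) ρ0 := hsv.integrable one_le_two
    have hAui : Integrable (Aop u) ρ1 := hAu.integrable one_le_two
    have int_fst : ∀ h : EuclideanSpace ℝ (Fin d) → ℝ, Integrable h ρ0 →
        Integrable (fun z : EuclideanSpace ℝ (Fin d) × EuclideanSpace ℝ (Fin d) => h z.1)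
          με := by
      intro h hh
      exact (integrable_map_measure (by rw [hmar0]; exact hh.1)
        measurable_fst.aemeasurable).mp (by rw [hmar0]; exact hh)
    have int_snd : ∀ h : EuclideanSpace ℝ (Fin d) → ℝ, Integrable h ρ1 →
        Integrable (fun z : EuclideanSpace ℝ (Fin d) × EuclideanSpace ℝ (Fin d) => h z.2)
          με := by
      intro h hh
      exact (integrable_map_measure (by rw [hmar1]; exact hh.1)
        measurable_snd.aemeasurable).mp (by rw [hmar1]; exact hh)
    have setint_fst_comp : ∀ h : EuclideanSpace ℝ (Fin d) → ℝ, Integrable h ρ0 →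
        ∀ t : Set (EuclideanSpace ℝ (Fin d)), MeasurableSet t →
        ∫ z in Prod.fst ⁻¹' t, h z.1 ∂με = ∫ x in t, h x ∂ρ0 := by
      intro h hh t ht
      conv_rhs => rw [← hmar0]
      rw [setIntegral_map ht (by rw [hmar0]; exact hh.1) measurable_fst.aemeasurable]
    have setint_snd_comp : ∀ h : EuclideanSpace ℝ (Fin d) → ℝ, Integrable h ρ1 →
        ∀ t : Set (EuclideanSpace ℝ (Fin d)), MeasurableSet t →
        ∫ z in Prod.snd ⁻¹' t, h z.2 ∂με = ∫ y in t, h y ∂ρ1 := by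
      intro h hh t ht
      conv_rhs => rw [← hmar1]
      rw [setIntegral_map ht (by rw [hmar1]; exact hh.1) measurable_snd.aemeasurable]
    have hφint : Integrable (fun z : EuclideanSpace ℝ (Fin d) × EuclideanSpace ℝ (Fin d) =>
        u z.1 + v z.2) με := (int_fst u hui).add (int_snd v hvi)
    constructor
    · -- conditioning on X
      have hm : MeasurableSpace.comap
          (Prod.fst : EuclideanSpace ℝ (Fin d) × EuclideanSpace ℝ (Fin d) →
            EuclideanSpace ℝ (Fin d)) inferInstance ≤
          (inferInstance :
            MeasurableSpace (EuclideanSpace ℝ (Fin d) × EuclideanSpace ℝ (Fin d))) :=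
        measurable_fst.comap_le
      haveI : IsFiniteMeasure (με.trim hm) :=
        ⟨by rw [trim_measurableSet_eq hm MeasurableSet.univ]; exact measure_lt_top _ _⟩
      refine (ae_eq_condExp_of_forall_setIntegral_eq hm hφint
        (fun s _ _ => (int_fst f hfi).integrableOn) ?_ ?_).symm
      · intro s hs _
        obtain ⟨t, ht, rfl⟩ := hs
        have e1 : ∫ z in Prod.fst ⁻¹' t, (u z.1 + v z.2) ∂με
            = (∫ z in Prod.fst ⁻¹' t, u z.1 ∂με) + ∫ z in Prod.fst ⁻¹' t, v z.2 ∂με :=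
          integral_add ((int_fst u hui).integrableOn) ((int_snd v hvi).integrableOn)
        have e2 : ∫ z in Prod.fst ⁻¹' t, v z.2 ∂με = ∫ x in t, Astar v x ∂ρ0 := by
          have hvv' : (fun z : EuclideanSpace ℝ (Fin d) × EuclideanSpace ℝ (Fin d) =>
              v z.2) =ᵐ[με] fun z => hv.1.mk v z.2 := by
            refine ae_eq_comp measurable_snd.aemeasurable ?_
            rw [hmar1]; exact hv.1.ae_eq_mk
          have h1 : ∫ z in Prod.fst ⁻¹' t, hv.1.mk v z.2
              ∂((ρ0.prod ρ1).withDensity fun z => ENNReal.ofReal (ξ z))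
              = ∫ x in t, (∫ y, hv.1.mk v y * ξ (x, y) ∂ρ1) ∂ρ0 :=
            setint_fst (K := fun x y => ξ (x, y)) hK hK0 Mcol
              hv.1.stronglyMeasurable_mk.measurable (hvi.congr hv.1.ae_eq_mk) ht
          have h2 : ∫ x in t, (∫ y, hv.1.mk v y * ξ (x, y) ∂ρ1) ∂ρ0
              = ∫ x in t, Astar v x ∂ρ0 := by
            refine integral_congr_ae (Filter.Eventually.of_forall fun x => ?_)
            simp only
            rw [hAstar_eq v _ hv.1.ae_eq_mk]
          rw [integral_congr_ae (ae_restrict_of_ae hvv'), hμε]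
          exact h1.trans h2
        have e3 : ∫ z in Prod.fst ⁻¹' t, u z.1 ∂με = ∫ x in t, u x ∂ρ0 :=
          setint_fst_comp u hui t ht
        have e4 : (∫ x in t, u x ∂ρ0) + ∫ x in t, Astar v x ∂ρ0
            = ∫ x in t, (u x + Astar v x) ∂ρ0 :=
          (integral_add hui.integrableOn hsvi.integrableOn).symm
        have e5 : ∫ x in t, (u x + Astar v x) ∂ρ0 = ∫ x in t, f x ∂ρ0 :=
          integral_congr_ae (ae_restrict_of_ae key0)
        rw [setint_fst_comp f hfi t ht, e1, e2, e3, e4, e5]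
      · exact ⟨fun z => hf.1.mk f z.1,
          (hf.1.stronglyMeasurable_mk).comp_measurable (Measurable.of_comap_le le_rfl),
          ae_eq_comp measurable_fst.aemeasurable (by rw [hmar0]; exact hf.1.ae_eq_mk)⟩
    · -- conditioning on Y
      have hm : MeasurableSpace.comap
          (Prod.snd : EuclideanSpace ℝ (Fin d) × EuclideanSpace ℝ (Fin d) →
            EuclideanSpace ℝ (Fin d)) inferInstance ≤
          (inferInstance :
            MeasurableSpace (EuclideanSpace ℝ (Fin d) × EuclideanSpace ℝ (Fin d))) :=
        measurable_snd.comap_le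
      haveI : IsFiniteMeasure (με.trim hm) :=
        ⟨by rw [trim_measurableSet_eq hm MeasurableSet.univ]; exact measure_lt_top _ _⟩
      refine (ae_eq_condExp_of_forall_setIntegral_eq hm hφint
        (fun s _ _ => (int_snd g hgi).integrableOn) ?_ ?_).symm
      · intro s hs _
        obtain ⟨t, ht, rfl⟩ := hs
        have e1 : ∫ z in Prod.snd ⁻¹' t, (u z.1 + v z.2) ∂με
            = (∫ z in Prod.snd ⁻¹' t, u z.1 ∂με) + ∫ z in Prod.snd ⁻¹' t, v z.2 ∂με :=
          integral_add ((int_fst u hui).integrableOn) ((int_snd v hvi).integrableOn)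
        have e2 : ∫ z in Prod.snd ⁻¹' t, u z.1 ∂με = ∫ y in t, Aop u y ∂ρ1 := by
          have huu' : (fun z : EuclideanSpace ℝ (Fin d) × EuclideanSpace ℝ (Fin d) =>
              u z.1) =ᵐ[με] fun z => hu.1.mk u z.1 := by
            refine ae_eq_comp measurable_fst.aemeasurable ?_
            rw [hmar0]; exact hu.1.ae_eq_mk
          have h1 : ∫ z in Prod.snd ⁻¹' t, hu.1.mk u z.1
              ∂((ρ0.prod ρ1).withDensity fun z => ENNReal.ofReal (ξ z))
              = ∫ y in t, (∫ x, hu.1.mk u x * ξ (x, y) ∂ρ0) ∂ρ1 :=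
            setint_snd (K := fun x y => ξ (x, y)) hK hK0 Mrow
              hu.1.stronglyMeasurable_mk.measurable (hui.congr hu.1.ae_eq_mk) ht
          have h2 : ∫ y in t, (∫ x, hu.1.mk u x * ξ (x, y) ∂ρ0) ∂ρ1
              = ∫ y in t, Aop u y ∂ρ1 := by
            refine integral_congr_ae (Filter.Eventually.of_forall fun y => ?_)
            simp only
            rw [hAop_eq u _ hu.1.ae_eq_mk]
          rw [integral_congr_ae (ae_restrict_of_ae huu'), hμε]
          exact h1.trans h2
        have e3 : ∫ z in Prod.snd ⁻¹' t, v z.2 ∂με = ∫ y in t, v y ∂ρ1 :=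
          setint_snd_comp v hvi t ht
        have e4 : (∫ y in t, Aop u y ∂ρ1) + ∫ y in t, v y ∂ρ1
            = ∫ y in t, (v y + Aop u y) ∂ρ1 := by
          rw [← integral_add hAui.integrableOn hvi.integrableOn]
          refine integral_congr_ae (Filter.Eventually.of_forall fun y => ?_)
          simp only
          ring
        have e5 : ∫ y in t, (v y + Aop u y) ∂ρ1 = ∫ y in t, g y ∂ρ1 :=
          integral_congr_ae (ae_restrict_of_ae key1)
        rw [setint_snd_comp g hgi t ht, e1, e2, e3, e4, e5]
      · exact ⟨fun z => hg.1.mk g z.2,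
          (hg.1.stronglyMeasurable_mk).comp_measurable (Measurable.of_comap_le le_rfl),
          ae_eq_comp measurable_snd.aemeasurable (by rw [hmar1]; exact hg.1.ae_eq_mk)⟩
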